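/- For every positive integer n, the game n·↑ is equivalent (equal as a game value) to the game {0 | (n−1)·↑ + *}. -/

import Mathlib

universe u

/-! Mathlib no longer contains combinatorial game theory (`SetTheory.PGame` was removed);
the notions used below are re-defined here with their old Mathlib meaning. -/
namespace SetTheory

/-- Pre-games, as in the old Mathlib `SetTheory.PGame`. -/
inductive PGame : Type (u + 1)
  | mk : ∀ α β : Type u, (α → PGame) → (β → PGame) → PGame

namespace PGame

def LeftMoves : PGame → Type u
  | mk l _ _ _ => l

def RightMoves : PGame → Type u
  | mk _ r _ _ => r

def moveLeft : ∀ g : PGame, LeftMoves g → PGame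
  | mk _l _ L _ => L

def moveRight : ∀ g : PGame, RightMoves g → PGame
  | mk _ _r _ R => R

def IsOption (x y : PGame) : Prop :=
  (∃ i, x = y.moveLeft i) ∨ ∃ j, x = y.moveRight j

theorem wf_isOption : WellFounded IsOption :=
  ⟨fun x => by
    induction x with
    | mk l r L R IHl IHr =>
      exact Acc.intro _ (by
        rintro y (⟨i, rfl⟩ | ⟨j, rfl⟩)
        exacts [IHl i, IHr j])⟩

instance : WellFoundedRelation PGame := ⟨IsOption, wf_isOption⟩

instance : Zero PGame := ⟨mk PEmpty PEmpty PEmpty.elim PEmpty.elim⟩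

instance : One PGame := ⟨mk PUnit PEmpty (fun _ => 0) PEmpty.elim⟩

/-- The game `* = {0 | 0}`. -/
def star : PGame := mk PUnit PUnit (fun _ => 0) fun _ => 0

/-- The pre-game with left options `L` and right options `R`. -/
def ofLists (L R : List PGame.{u}) : PGame.{u} :=
  mk (ULift (Fin L.length)) (ULift (Fin R.length)) (fun i => L[i.down.1]) fun j => R[j.down.1]

def neg : PGame → PGame
  | mk l r L R => mk r l (fun i => neg (R i)) fun i => neg (L i)

instance : Neg PGame := ⟨neg⟩

def addAux (xl xr : Type u) (fL : xl → PGame → PGame) (fR : xr → PGame → PGame) :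
    PGame → PGame
  | mk yl yr yL yR =>
    mk (xl ⊕ yl) (xr ⊕ yr)
      (Sum.rec (fun i => fL i (mk yl yr yL yR)) fun j => addAux xl xr fL fR (yL j))
      (Sum.rec (fun i => fR i (mk yl yr yL yR)) fun j => addAux xl xr fL fR (yR j))

/-- Disjunctive sum. -/
def add : PGame → PGame → PGame
  | mk xl xr xL xR => addAux xl xr (fun i => add (xL i)) fun j => add (xR j)

instance : Add PGame := ⟨add⟩

def leLFAux (xl xr : Type u) (IL : xl → PGame → Prop × Prop) (IR : xr → PGame → Prop × Prop) :
    PGame → Prop × Prop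
  | mk yl yr yL yR =>
    ((∀ i, (IL i (mk yl yr yL yR)).2) ∧ ∀ j, (leLFAux xl xr IL IR (yR j)).2,
      (∃ i, (leLFAux xl xr IL IR (yL i)).1) ∨ ∃ j, (IR j (mk yl yr yL yR)).1)

/-- `(leLF x y).1` is `x ≤ y`, `(leLF x y).2` is `x ⧏ y`. -/
def leLF : PGame → PGame → Prop × Prop
  | mk xl xr xL xR => leLFAux xl xr (fun i => leLF (xL i)) fun j => leLF (xR j)

instance : LE PGame := ⟨fun x y => (leLF x y).1⟩

instance : LT PGame := ⟨fun x y => x ≤ y ∧ ¬y ≤ x⟩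

def Equiv (x y : PGame) : Prop := x ≤ y ∧ y ≤ x

instance : HasEquiv PGame := ⟨Equiv⟩

end PGame

end SetTheory
open SetTheory PGame
open scoped PGame

/-- The game up, ↑ = {0 | *}. -/
def upG : PGame := ofLists [0] [star]

/-- The game down, ↓ = {* | 0}. -/
def downG : PGame := ofLists [star] [0]

/-- `copies n G` is the disjunctive sum of `n` copies of `G`. -/
def copies : ℕ → PGame → PGame
  | 0, _ => 0
  | n + 1, G => copies n G + G

/-- A game is dicotic (all-small) if either it has no options for either player, or
both players have at least one option and every option is dicotic. -/
def Dicotic (G : PGame) : Prop :=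
  (IsEmpty G.LeftMoves ∧ IsEmpty G.RightMoves ∨
    Nonempty G.LeftMoves ∧ Nonempty G.RightMoves) ∧
    (∀ i, Dicotic (G.moveLeft i)) ∧ ∀ j, Dicotic (G.moveRight j)
termination_by G
decreasing_by
  all_goals first
    | exact (Or.inl ⟨_, rfl⟩ : IsOption _ _)
    | exact (Or.inr ⟨_, rfl⟩ : IsOption _ _)

/-- The dicotic transformation δ: every empty option set is replaced by the single option 0. -/
def delta : PGame → PGame
  | PGame.mk l r L R =>
    PGame.mk (l ⊕ PLift (IsEmpty l)) (r ⊕ PLift (IsEmpty r))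
      (Sum.rec (fun i => delta (L i)) fun _ => 0)
      (Sum.rec (fun j => delta (R j)) fun _ => 0)

/-- A game is infinitesimal if every positive multiple lies strictly between -1 and 1. -/
def Infinitesimal (G : PGame) : Prop :=
  ∀ n : ℕ, 0 < n → copies n G < 1 ∧ -1 < copies n G


namespace SetTheory
namespace PGame

/-- `x ⧏ y` : `x` is less than or fuzzy with `y`. -/
def LF (x y : PGame.{u}) : Prop := ¬ y ≤ x

infix:50 " ⧏ " => LF

theorem leLF_fst_mk {xl xr : Type u} {xL : xl → PGame.{u}} {xR : xr → PGame.{u}}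
    {yl yr : Type u} {yL : yl → PGame.{u}} {yR : yr → PGame.{u}} :
    (leLF (mk xl xr xL xR) (mk yl yr yL yR)).1 ↔
      (∀ i, (leLF (xL i) (mk yl yr yL yR)).2) ∧ ∀ j, (leLF (mk xl xr xL xR) (yR j)).2 :=
  Iff.rfl

theorem leLF_snd_mk {xl xr : Type u} {xL : xl → PGame.{u}} {xR : xr → PGame.{u}}
    {yl yr : Type u} {yL : yl → PGame.{u}} {yR : yr → PGame.{u}} :
    (leLF (mk xl xr xL xR) (mk yl yr yL yR)).2 ↔
      (∃ i, (leLF (mk xl xr xL xR) (yL i)).1) ∨ ∃ j, (leLF (xR j) (mk yl yr yL yR)).1 :=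
  Iff.rfl

theorem leLF_snd_iff_aux (x : PGame.{u}) : ∀ y : PGame.{u},
    ((leLF x y).2 ↔ ¬ (leLF y x).1) ∧ ((leLF y x).2 ↔ ¬ (leLF x y).1) := by
  induction x with
  | mk xl xr xL xR ihxl ihxr =>
  intro y
  induction y with
  | mk yl yr yL yR ihyl ihyr =>
  constructor
  · rw [leLF_snd_mk, leLF_fst_mk]
    have h1 : ∀ i, (leLF (yL i) (mk xl xr xL xR)).2 ↔ ¬ (leLF (mk xl xr xL xR) (yL i)).1 :=
      fun i => (ihyl i).2
    have h2 : ∀ j, (leLF (mk yl yr yL yR) (xR j)).2 ↔ ¬ (leLF (xR j) (mk yl yr yL yR)).1 :=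
      fun j => (ihxr j _).2
    simp only [h1, h2, not_and_or, not_forall, not_not]
  · rw [leLF_snd_mk, leLF_fst_mk]
    have h3 : ∀ i, (leLF (xL i) (mk yl yr yL yR)).2 ↔ ¬ (leLF (mk yl yr yL yR) (xL i)).1 :=
      fun i => (ihxl i _).1
    have h4 : ∀ j, (leLF (mk xl xr xL xR) (yR j)).2 ↔ ¬ (leLF (yR j) (mk xl xr xL xR)).1 :=
      fun j => (ihyr j).1
    simp only [h3, h4, not_and_or, not_forall, not_not]

theorem leLF_snd_iff (x y : PGame.{u}) : (leLF x y).2 ↔ ¬ (leLF y x).1 :=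
  (leLF_snd_iff_aux x y).1

theorem le_iff_forall_lf {x y : PGame.{u}} :
    x ≤ y ↔ (∀ i, x.moveLeft i ⧏ y) ∧ ∀ j, x ⧏ y.moveRight j := by
  rcases x with ⟨xl, xr, xL, xR⟩
  rcases y with ⟨yl, yr, yL, yR⟩
  show (leLF _ _).1 ↔ _
  rw [leLF_fst_mk]
  exact and_congr (forall_congr' fun i => leLF_snd_iff _ _)
    (forall_congr' fun j => leLF_snd_iff _ _)

theorem lf_iff_exists_le {x y : PGame.{u}} :
    x ⧏ y ↔ (∃ i, x ≤ y.moveLeft i) ∨ ∃ j, x.moveRight j ≤ y := by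
  unfold LF
  rw [le_iff_forall_lf (x := y) (y := x)]
  simp only [LF, not_and_or, not_forall, not_not]

theorem not_le {x y : PGame.{u}} : ¬ x ≤ y ↔ y ⧏ x := Iff.rfl

theorem lf_of_le_moveLeft {x y : PGame.{u}} {i : y.LeftMoves} (h : x ≤ y.moveLeft i) : x ⧏ y :=
  lf_iff_exists_le.2 (Or.inl ⟨i, h⟩)

theorem lf_of_moveRight_le {x y : PGame.{u}} {j : x.RightMoves} (h : x.moveRight j ≤ y) :
    x ⧏ y :=
  lf_iff_exists_le.2 (Or.inr ⟨j, h⟩)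

theorem moveLeft_lf_of_le {x y : PGame.{u}} (h : x ≤ y) (i : x.LeftMoves) : x.moveLeft i ⧏ y :=
  (le_iff_forall_lf.1 h).1 i

theorem lf_moveRight_of_le {x y : PGame.{u}} (h : x ≤ y) (j : y.RightMoves) :
    x ⧏ y.moveRight j :=
  (le_iff_forall_lf.1 h).2 j

protected theorem le_refl' (x : PGame.{u}) : x ≤ x := by
  induction x with
  | mk xl xr xL xR ihl ihr =>
  exact le_iff_forall_lf.2 ⟨fun i => lf_of_le_moveLeft (ihl i), fun j => lf_of_moveRight_le (ihr j)⟩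

theorem le_trans_aux (x : PGame.{u}) : ∀ y z : PGame.{u},
    (x ≤ y → y ≤ z → x ≤ z) ∧ (y ≤ z → z ≤ x → y ≤ x) ∧ (z ≤ x → x ≤ y → z ≤ y) := by
  induction x with
  | mk xl xr xL xR ihxl ihxr =>
  intro y
  induction y with
  | mk yl yr yL yR ihyl ihyr =>
  intro z
  induction z with
  | mk zl zr zL zR ihzl ihzr =>
  refine ⟨fun h₁ h₂ => ?_, fun h₁ h₂ => ?_, fun h₁ h₂ => ?_⟩
  · refine le_iff_forall_lf.2 ⟨fun i h => ?_, fun j h => ?_⟩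
    · exact moveLeft_lf_of_le h₁ i ((ihxl i _ _).2.1 h₂ h)
    · exact lf_moveRight_of_le h₂ j ((ihzr j).2.2 h h₁)
  · refine le_iff_forall_lf.2 ⟨fun i h => ?_, fun j h => ?_⟩
    · exact moveLeft_lf_of_le h₁ i ((ihyl i _).2.2 h₂ h)
    · exact lf_moveRight_of_le h₂ j ((ihxr j _ _).1 h h₁)
  · refine le_iff_forall_lf.2 ⟨fun i h => ?_, fun j h => ?_⟩
    · exact moveLeft_lf_of_le h₁ i ((ihzl i).1 h₂ h)
    · exact lf_moveRight_of_le h₂ j ((ihyr j _).2.1 h h₁)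

protected theorem le_trans' {x y z : PGame.{u}} (h₁ : x ≤ y) (h₂ : y ≤ z) : x ≤ z :=
  (le_trans_aux x y z).1 h₁ h₂

instance : Preorder PGame.{u} where
  le x y := x ≤ y
  lt x y := x < y
  le_refl := PGame.le_refl'
  le_trans := fun _ _ _ => PGame.le_trans'
  lt_iff_le_not_ge := fun _ _ => Iff.rfl

theorem lf_irrefl (x : PGame.{u}) : ¬ x ⧏ x := not_not.2 (le_refl x)

theorem equiv_def {x y : PGame.{u}} : x ≈ y ↔ x ≤ y ∧ y ≤ x := Iff.rfl

@[refl] theorem equiv_refl (x : PGame.{u}) : x ≈ x := equiv_def.2 ⟨le_refl x, le_refl x⟩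

theorem Equiv.symm {x y : PGame.{u}} (h : x ≈ y) : y ≈ x :=
  equiv_def.2 ⟨(equiv_def.1 h).2, (equiv_def.1 h).1⟩

theorem Equiv.trans {x y z : PGame.{u}} (h₁ : x ≈ y) (h₂ : y ≈ z) : x ≈ z :=
  equiv_def.2 ⟨le_trans (equiv_def.1 h₁).1 (equiv_def.1 h₂).1,
    le_trans (equiv_def.1 h₂).2 (equiv_def.1 h₁).2⟩

theorem le_congr {x₁ y₁ x₂ y₂ : PGame.{u}} (hx : x₁ ≈ x₂) (hy : y₁ ≈ y₂) :
    x₁ ≤ y₁ ↔ x₂ ≤ y₂ :=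
  ⟨fun h => le_trans (equiv_def.1 hx).2 (le_trans h (equiv_def.1 hy).1),
    fun h => le_trans (equiv_def.1 hx).1 (le_trans h (equiv_def.1 hy).2)⟩

theorem le_congr_left {x₁ x₂ y : PGame.{u}} (hx : x₁ ≈ x₂) : x₁ ≤ y ↔ x₂ ≤ y :=
  le_congr hx (equiv_refl _)

theorem le_congr_right {x y₁ y₂ : PGame.{u}} (hy : y₁ ≈ y₂) : x ≤ y₁ ↔ x ≤ y₂ :=
  le_congr (equiv_refl _) hy

theorem lf_congr_left {x₁ x₂ y : PGame.{u}} (hx : x₁ ≈ x₂) : x₁ ⧏ y ↔ x₂ ⧏ y :=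
  not_congr (le_congr_right hx)

theorem lf_congr_right {x y₁ y₂ : PGame.{u}} (hy : y₁ ≈ y₂) : x ⧏ y₁ ↔ x ⧏ y₂ :=
  not_congr (le_congr_left hy)

theorem Equiv.of_exists {x y : PGame.{u}}
    (hl₁ : ∀ i, ∃ j, x.moveLeft i ≈ y.moveLeft j) (hr₁ : ∀ i, ∃ j, x.moveRight i ≈ y.moveRight j)
    (hl₂ : ∀ j, ∃ i, x.moveLeft i ≈ y.moveLeft j) (hr₂ : ∀ j, ∃ i, x.moveRight i ≈ y.moveRight j) :
    x ≈ y := by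
  refine equiv_def.2 ⟨le_iff_forall_lf.2 ⟨fun i => ?_, fun j => ?_⟩,
    le_iff_forall_lf.2 ⟨fun j => ?_, fun i => ?_⟩⟩
  · obtain ⟨j, hj⟩ := hl₁ i; exact lf_of_le_moveLeft (equiv_def.1 hj).1
  · obtain ⟨i, hi⟩ := hr₂ j; exact lf_of_moveRight_le (equiv_def.1 hi).1
  · obtain ⟨i, hi⟩ := hl₂ j; exact lf_of_le_moveLeft (equiv_def.1 hi).2
  · obtain ⟨j, hj⟩ := hr₁ i; exact lf_of_moveRight_le (equiv_def.1 hj).2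

instance isEmpty_zero_leftMoves : IsEmpty (0 : PGame.{u}).LeftMoves :=
  inferInstanceAs (IsEmpty PEmpty)

instance isEmpty_zero_rightMoves : IsEmpty (0 : PGame.{u}).RightMoves :=
  inferInstanceAs (IsEmpty PEmpty)

instance inhabited_star_leftMoves : Inhabited star.{u}.LeftMoves := ⟨(PUnit.unit : PUnit)⟩

instance inhabited_star_rightMoves : Inhabited star.{u}.RightMoves := ⟨(PUnit.unit : PUnit)⟩

theorem star_moveLeft (x : star.{u}.LeftMoves) : star.moveLeft x = 0 := rfl

theorem star_moveRight (x : star.{u}.RightMoves) : star.moveRight x = 0 := rfl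

theorem zero_lf_star : (0 : PGame.{u}) ⧏ star :=
  lf_of_le_moveLeft (i := (default : star.{u}.LeftMoves)) (le_refl _)

def toOfListsLeftMoves {L R : List PGame.{u}} (i : Fin L.length) : (ofLists L R).LeftMoves :=
  ULift.up i

def toOfListsRightMoves {L R : List PGame.{u}} (i : Fin R.length) : (ofLists L R).RightMoves :=
  ULift.up i

def toLeftMovesAdd {x y : PGame.{u}} (i : x.LeftMoves ⊕ y.LeftMoves) : (x + y).LeftMoves :=
  match x, y, i with
  | mk _ _ _ _, mk _ _ _ _, i => i

def toRightMovesAdd {x y : PGame.{u}} (i : x.RightMoves ⊕ y.RightMoves) : (x + y).RightMoves :=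
  match x, y, i with
  | mk _ _ _ _, mk _ _ _ _, i => i

theorem add_moveLeft_inl {x y : PGame.{u}} (i : x.LeftMoves) :
    (x + y).moveLeft (toLeftMovesAdd (Sum.inl i)) = x.moveLeft i + y := by
  cases x; cases y; rfl

theorem add_moveLeft_inr {x y : PGame.{u}} (i : y.LeftMoves) :
    (x + y).moveLeft (toLeftMovesAdd (Sum.inr i)) = x + y.moveLeft i := by
  cases x; cases y; rfl

theorem add_moveRight_inl {x y : PGame.{u}} (i : x.RightMoves) :
    (x + y).moveRight (toRightMovesAdd (Sum.inl i)) = x.moveRight i + y := by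
  cases x; cases y; rfl

theorem add_moveRight_inr {x y : PGame.{u}} (i : y.RightMoves) :
    (x + y).moveRight (toRightMovesAdd (Sum.inr i)) = x + y.moveRight i := by
  cases x; cases y; rfl

theorem leftMoves_add_cases {x y : PGame.{u}} (k : (x + y).LeftMoves)
    {P : (x + y).LeftMoves → Prop} (hl : ∀ i, P (toLeftMovesAdd (Sum.inl i)))
    (hr : ∀ i, P (toLeftMovesAdd (Sum.inr i))) : P k := by
  cases x; cases y
  rcases k with i | i
  exacts [hl i, hr i]

theorem rightMoves_add_cases {x y : PGame.{u}} (k : (x + y).RightMoves)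
    {P : (x + y).RightMoves → Prop} (hl : ∀ i, P (toRightMovesAdd (Sum.inl i)))
    (hr : ∀ i, P (toRightMovesAdd (Sum.inr i))) : P k := by
  cases x; cases y
  rcases k with i | i
  exacts [hl i, hr i]

theorem add_comm_equiv (x : PGame.{u}) : ∀ y : PGame.{u}, x + y ≈ y + x := by
  induction x with
  | mk xl xr xL xR ihl ihr =>
  intro y
  induction y with
  | mk yl yr yL yR jhl jhr =>
  apply Equiv.of_exists
  · rintro (i | i)
    · exact ⟨Sum.inr i, ihl i _⟩
    · exact ⟨Sum.inl i, jhl i⟩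
  · rintro (i | i)
    · exact ⟨Sum.inr i, ihr i _⟩
    · exact ⟨Sum.inl i, jhr i⟩
  · rintro (i | i)
    · exact ⟨Sum.inr i, jhl i⟩
    · exact ⟨Sum.inl i, ihl i _⟩
  · rintro (i | i)
    · exact ⟨Sum.inr i, jhr i⟩
    · exact ⟨Sum.inl i, ihr i _⟩

theorem add_zero_equiv (x : PGame.{u}) : x + 0 ≈ x := by
  induction x with
  | mk xl xr xL xR ihl ihr =>
  apply Equiv.of_exists
  · rintro (i | ⟨⟨⟩⟩)
    exact ⟨i, ihl i⟩
  · rintro (i | ⟨⟨⟩⟩)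
    exact ⟨i, ihr i⟩
  · intro i
    exact ⟨Sum.inl i, ihl i⟩
  · intro i
    exact ⟨Sum.inl i, ihr i⟩

theorem add_assoc_equiv (x : PGame.{u}) : ∀ y z : PGame.{u}, x + y + z ≈ x + (y + z) := by
  induction x with
  | mk xl xr xL xR ihxl ihxr =>
  intro y
  induction y with
  | mk yl yr yL yR ihyl ihyr =>
  intro z
  induction z with
  | mk zl zr zL zR ihzl ihzr =>
  apply Equiv.of_exists
  · rintro ((i | i) | i)
    · exact ⟨Sum.inl i, ihxl i _ _⟩
    · exact ⟨Sum.inr (Sum.inl i), ihyl i _⟩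
    · exact ⟨Sum.inr (Sum.inr i), ihzl i⟩
  · rintro ((i | i) | i)
    · exact ⟨Sum.inl i, ihxr i _ _⟩
    · exact ⟨Sum.inr (Sum.inl i), ihyr i _⟩
    · exact ⟨Sum.inr (Sum.inr i), ihzr i⟩
  · rintro (i | (i | i))
    · exact ⟨Sum.inl (Sum.inl i), ihxl i _ _⟩
    · exact ⟨Sum.inl (Sum.inr i), ihyl i _⟩
    · exact ⟨Sum.inr i, ihzl i⟩
  · rintro (i | (i | i))
    · exact ⟨Sum.inl (Sum.inl i), ihxr i _ _⟩
    · exact ⟨Sum.inl (Sum.inr i), ihyr i _⟩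
    · exact ⟨Sum.inr i, ihzr i⟩

theorem add_le_lf_aux (y : PGame.{u}) : ∀ z x : PGame.{u},
    (y ≤ z → y + x ≤ z + x) ∧ (y ⧏ z → y + x ⧏ z + x) := by
  induction y with
  | mk yl yr yL yR ihyl ihyr =>
  intro z
  induction z with
  | mk zl zr zL zR ihzl ihzr =>
  intro x
  induction x with
  | mk xl xr xL xR ihxl ihxr =>
  refine ⟨fun h => ?_, fun h => ?_⟩
  · have h' := le_iff_forall_lf.1 h
    refine le_iff_forall_lf.2 ⟨?_, ?_⟩
    · rintro (i | k)
      · exact (ihyl i _ _).2 (h'.1 i)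
      · exact lf_of_le_moveLeft (y := mk zl zr zL zR + mk xl xr xL xR) (i := Sum.inr k)
          ((ihxl k).1 h)
    · rintro (j | k)
      · exact (ihzr j _).2 (h'.2 j)
      · exact lf_of_moveRight_le (x := mk yl yr yL yR + mk xl xr xL xR) (j := Sum.inr k)
          ((ihxr k).1 h)
  · rcases lf_iff_exists_le.1 h with ⟨i, hi⟩ | ⟨j, hj⟩
    · exact lf_of_le_moveLeft (y := mk zl zr zL zR + mk xl xr xL xR) (i := Sum.inl i)
        ((ihzl i _).1 hi)
    · exact lf_of_moveRight_le (x := mk yl yr yL yR + mk xl xr xL xR) (j := Sum.inl j)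
        ((ihyr j _ _).1 hj)

theorem add_le_add_right' {y z : PGame.{u}} (h : y ≤ z) (x : PGame.{u}) : y + x ≤ z + x :=
  (add_le_lf_aux y z x).1 h

theorem add_le_add_left' {y z : PGame.{u}} (h : y ≤ z) (x : PGame.{u}) : x + y ≤ x + z :=
  (le_congr (add_comm_equiv y x) (add_comm_equiv z x)).1 (add_le_add_right' h x)

theorem add_congr {w x y z : PGame.{u}} (h₁ : w ≈ x) (h₂ : y ≈ z) : w + y ≈ x + z :=
  equiv_def.2 ⟨le_trans (add_le_add_right' (equiv_def.1 h₁).1 y) (add_le_add_left' (equiv_def.1 h₂).1 x),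
    le_trans (add_le_add_right' (equiv_def.1 h₁).2 z) (add_le_add_left' (equiv_def.1 h₂).2 w)⟩

theorem add_congr_left {x₁ x₂ y : PGame.{u}} (h : x₁ ≈ x₂) : x₁ + y ≈ x₂ + y :=
  add_congr h (equiv_refl _)

theorem neg_le_neg_aux (x : PGame.{u}) : ∀ y : PGame.{u},
    (-y ≤ -x ↔ x ≤ y) ∧ (-x ≤ -y ↔ y ≤ x) := by
  induction x with
  | mk xl xr xL xR ihxl ihxr =>
  intro y
  induction y with
  | mk yl yr yL yR ihyl ihyr =>
  constructor
  · refine le_iff_forall_lf.trans (Iff.trans ?_ le_iff_forall_lf.symm)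
    exact ⟨fun ⟨h1, h2⟩ => ⟨fun j => (not_congr (ihxl j _).2).1 (h2 j),
        fun i => (not_congr (ihyr i).2).1 (h1 i)⟩,
      fun ⟨h1, h2⟩ => ⟨fun i => (not_congr (ihyr i).2).2 (h2 i),
        fun j => (not_congr (ihxl j _).2).2 (h1 j)⟩⟩
  · refine le_iff_forall_lf.trans (Iff.trans ?_ le_iff_forall_lf.symm)
    exact ⟨fun ⟨h1, h2⟩ => ⟨fun j => (not_congr (ihyl j).1).1 (h2 j),
        fun i => (not_congr (ihxr i _).1).1 (h1 i)⟩,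
      fun ⟨h1, h2⟩ => ⟨fun i => (not_congr (ihxr i _).1).2 (h2 i),
        fun j => (not_congr (ihyl j).1).2 (h1 j)⟩⟩

theorem neg_le_neg_iff' {x y : PGame.{u}} : -y ≤ -x ↔ x ≤ y := (neg_le_neg_aux x y).1

theorem neg_congr {x y : PGame.{u}} (h : x ≈ y) : -x ≈ -y :=
  equiv_def.2 ⟨neg_le_neg_iff'.2 (equiv_def.1 h).2, neg_le_neg_iff'.2 (equiv_def.1 h).1⟩

theorem neg_add_cancel_aux (x : PGame.{u}) : -x + x ≤ 0 ∧ 0 ≤ -x + x := by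
  induction x with
  | mk xl xr xL xR ihl ihr =>
  constructor
  · refine le_iff_forall_lf.2 ⟨?_, fun j => isEmptyElim j⟩
    rintro (i | i)
    · exact lf_of_moveRight_le (x := -xR i + mk xl xr xL xR)
        (j := toRightMovesAdd (x := -xR i) (y := mk xl xr xL xR) (Sum.inr i))
        ((add_moveRight_inr (x := -xR i) (y := mk xl xr xL xR) i).trans_le (ihr i).1)
    · exact lf_of_moveRight_le (x := -(mk xl xr xL xR) + xL i)
        (j := toRightMovesAdd (x := -(mk xl xr xL xR)) (y := xL i) (Sum.inl i))
        ((add_moveRight_inl (x := -(mk xl xr xL xR)) (y := xL i) i).trans_le (ihl i).1)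
  · refine le_iff_forall_lf.2 ⟨fun i => isEmptyElim i, ?_⟩
    rintro (i | i)
    · exact lf_of_le_moveLeft (y := -xL i + mk xl xr xL xR)
        (i := toLeftMovesAdd (x := -xL i) (y := mk xl xr xL xR) (Sum.inr i))
        ((ihl i).2.trans_eq (add_moveLeft_inr (x := -xL i) (y := mk xl xr xL xR) i).symm)
    · exact lf_of_le_moveLeft (y := -(mk xl xr xL xR) + xR i)
        (i := toLeftMovesAdd (x := -(mk xl xr xL xR)) (y := xR i) (Sum.inl i))
        ((ihr i).2.trans_eq (add_moveLeft_inl (x := -(mk xl xr xL xR)) (y := xR i) i).symm)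

theorem neg_add_cancel_equiv (x : PGame.{u}) : -x + x ≈ 0 :=
  equiv_def.2 (neg_add_cancel_aux x)

instance setoid : Setoid PGame.{u} :=
  ⟨fun x y => x ≈ y, ⟨equiv_refl, Equiv.symm, Equiv.trans⟩⟩

end PGame

/-- Games: pre-games up to equivalence. -/
abbrev Game : Type (u + 1) := Quotient PGame.setoid.{u}

namespace Game

instance : Zero Game.{u} := ⟨⟦0⟧⟩

instance : Add Game.{u} :=
  ⟨Quotient.lift₂ (fun x y => ⟦x + y⟧) fun _ _ _ _ hx hy => Quotient.sound (PGame.add_congr hx hy)⟩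

instance : Neg Game.{u} :=
  ⟨Quotient.lift (fun x => ⟦-x⟧) fun _ _ h => Quotient.sound (PGame.neg_congr h)⟩

instance : AddCommGroup Game.{u} where
  add_assoc := by
    rintro ⟨x⟩ ⟨y⟩ ⟨z⟩; exact Quotient.sound (PGame.add_assoc_equiv x y z)
  zero_add := by
    rintro ⟨x⟩
    exact Quotient.sound ((PGame.add_comm_equiv 0 x).trans (PGame.add_zero_equiv x))
  add_zero := by
    rintro ⟨x⟩; exact Quotient.sound (PGame.add_zero_equiv x)
  neg_add_cancel := by
    rintro ⟨x⟩; exact Quotient.sound (PGame.neg_add_cancel_equiv x)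
  add_comm := by
    rintro ⟨x⟩ ⟨y⟩; exact Quotient.sound (PGame.add_comm_equiv x y)
  nsmul := nsmulRec
  zsmul := zsmulRec

instance : LE Game.{u} :=
  ⟨Quotient.lift₂ (fun x y => x ≤ y) fun _ _ _ _ hx hy => propext (PGame.le_congr hx hy)⟩

instance : LT Game.{u} := ⟨fun a b => a ≤ b ∧ ¬ b ≤ a⟩

instance : Preorder Game.{u} where
  le a b := a ≤ b
  lt a b := a < b
  lt_iff_le_not_ge := fun _ _ => Iff.rfl
  le_refl := by rintro ⟨x⟩; exact le_refl x
  le_trans := by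
    rintro ⟨x⟩ ⟨y⟩ ⟨z⟩ h₁ h₂; exact PGame.le_trans' (x := x) (y := y) (z := z) h₁ h₂

instance : PartialOrder Game.{u} :=
  { (inferInstance : Preorder Game.{u}) with
    le_antisymm := by
      rintro ⟨x⟩ ⟨y⟩ h₁ h₂; exact Quotient.sound (PGame.equiv_def (x := x) (y := y) |>.2 ⟨h₁, h₂⟩) }

instance : IsOrderedAddMonoid Game.{u} where
  add_le_add_left := by
    rintro ⟨a⟩ ⟨b⟩ h ⟨c⟩; exact PGame.add_le_add_right' (y := a) (z := b) h c

end Game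

namespace PGame

theorem quot_add (x y : PGame.{u}) : (⟦x + y⟧ : Game) = ⟦x⟧ + ⟦y⟧ := rfl

@[simp] theorem quot_zero : (⟦0⟧ : Game.{u}) = 0 := rfl

theorem le_iff_game_le {x y : PGame.{u}} : x ≤ y ↔ (⟦x⟧ : Game) ≤ ⟦y⟧ := Iff.rfl

theorem equiv_iff_game_eq {x y : PGame.{u}} : x ≈ y ↔ (⟦x⟧ : Game) = ⟦y⟧ :=
  ⟨fun h => Quotient.sound h, fun h => Quotient.exact h⟩

end PGame

end SetTheory

open SetTheory PGame

theorem LE.le.moveLeft_lf {x y : PGame.{u}} (h : x ≤ y) (i : x.LeftMoves) : x.moveLeft i ⧏ y :=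
  moveLeft_lf_of_le h i

theorem LE.le.lf_moveRight {x y : PGame.{u}} (h : x ≤ y) (j : y.RightMoves) :
    x ⧏ y.moveRight j :=
  lf_moveRight_of_le h j

namespace UpAux

lemma copies_zero : copies 0 upG.{u} = 0 := rfl
lemma copies_succ (k : ℕ) : copies (k + 1) upG.{u} = copies k upG + upG := rfl

/-- The unique left move of `upG`. -/
def uL : upG.{u}.LeftMoves := toOfListsLeftMoves (0 : Fin 1)
/-- The unique right move of `upG`. -/
def uR : upG.{u}.RightMoves := toOfListsRightMoves (0 : Fin 1)

lemma upG_moveLeft (i : upG.{u}.LeftMoves) : upG.moveLeft i = 0 := by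
  obtain ⟨i⟩ := i; fin_cases i; rfl

lemma upG_moveRight (j : upG.{u}.RightMoves) : upG.moveRight j = PGame.star := by
  obtain ⟨j⟩ := j; fin_cases j; rfl

/-- `H X = {0 | X + *}`. -/
abbrev H (X : PGame.{u}) : PGame.{u} := ofLists [0] [X + PGame.star]

def hL (X : PGame.{u}) : (H X).LeftMoves := toOfListsLeftMoves (0 : Fin 1)
def hR (X : PGame.{u}) : (H X).RightMoves := toOfListsRightMoves (0 : Fin 1)

lemma H_moveLeft (X : PGame.{u}) (i : (H X).LeftMoves) : (H X).moveLeft i = 0 := by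
  obtain ⟨i⟩ := i; fin_cases i; rfl

lemma H_moveRight (X : PGame.{u}) (j : (H X).RightMoves) :
    (H X).moveRight j = X + PGame.star := by
  obtain ⟨j⟩ := j; fin_cases j; rfl

lemma quot_copies (k : ℕ) : (⟦copies k upG.{u}⟧ : Game) = k • (⟦upG.{u}⟧ : Game) := by
  induction k with
  | zero => simp [copies_zero]
  | succ k ih => rw [copies_succ, quot_add, ih, succ_nsmul]

lemma zero_le_upG : (0 : PGame.{u}) ≤ upG := by
  rw [le_iff_forall_lf]
  constructor
  · exact fun i => isEmptyElim i
  · intro j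
    rw [upG_moveRight]
    exact zero_lf_star

lemma zero_le_copies (k : ℕ) : (0 : PGame.{u}) ≤ copies k upG := by
  induction k with
  | zero => exact le_refl _
  | succ k ih =>
    rw [le_iff_game_le] at ih ⊢
    rw [copies_succ, quot_add]
    have h0 : (⟦(0 : PGame.{u})⟧ : Game) ≤ ⟦upG⟧ := le_iff_game_le.mp zero_le_upG
    simpa using add_le_add ih h0

lemma zero_lf_copies_add_star (k : ℕ) :
    (0 : PGame.{u}) ⧏ copies k upG + PGame.star := by
  apply lf_of_le_moveLeft (i := toLeftMovesAdd (Sum.inr (default : PGame.star.LeftMoves)))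
  rw [add_moveLeft_inr, star_moveLeft]
  exact (le_congr_right (add_zero_equiv _)).mpr (zero_le_copies k)

lemma not_copies_add_star_le_zero (k : ℕ) :
    ¬ copies k upG.{u} + PGame.star ≤ 0 :=
  PGame.not_le.mpr (zero_lf_copies_add_star k)

lemma not_star_le_upG : ¬ (PGame.star.{u} ≤ upG) := by
  intro h
  have := h.lf_moveRight uR
  rw [upG_moveRight] at this
  exact lf_irrefl _ this

lemma not_copies_succ_le_zero (k : ℕ) : ¬ copies (k + 1) upG.{u} ≤ 0 := by
  rw [copies_succ]
  intro h
  have := h.moveLeft_lf (toLeftMovesAdd (Sum.inr uL))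
  rw [add_moveLeft_inr, upG_moveLeft] at this
  exact (PGame.not_le.mpr this)
    ((le_congr_right (add_zero_equiv _)).mpr (zero_le_copies k))

/-- Every left option of `(m+1)` copies of up is equivalent to `m` copies. -/
lemma copies_moveLeft : ∀ (m : ℕ) (i : (copies m upG.{u} + upG).LeftMoves),
    (copies m upG + upG).moveLeft i ≈ copies m upG := by
  intro m
  induction m with
  | zero =>
    intro i
    refine leftMoves_add_cases
      (P := fun i => (copies 0 upG.{u} + upG).moveLeft i ≈ copies 0 upG) i ?_ ?_
    · exact fun i => isEmptyElim (α := ((0 : PGame.{u}).LeftMoves)) i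
    · intro i
      rw [add_moveLeft_inr, upG_moveLeft]
      exact add_zero_equiv _
  | succ m ih =>
    intro i
    refine leftMoves_add_cases
      (P := fun i => (copies (m+1) upG.{u} + upG).moveLeft i ≈ copies (m+1) upG) i ?_ ?_
    · intro i
      rw [add_moveLeft_inl]
      show (copies m upG + upG).moveLeft i + upG ≈ copies (m+1) upG
      rw [copies_succ]
      exact add_congr_left (ih i)
    · intro i
      rw [add_moveLeft_inr, upG_moveLeft]
      exact add_zero_equiv _

/-- Every right option of `(m+1)` copies of up is equivalent to `m` copies plus star. -/
lemma copies_moveRight : ∀ (m : ℕ) (j : (copies m upG.{u} + upG).RightMoves),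
    (copies m upG + upG).moveRight j ≈ copies m upG + PGame.star := by
  intro m
  induction m with
  | zero =>
    intro j
    refine rightMoves_add_cases
      (P := fun j => (copies 0 upG.{u} + upG).moveRight j ≈ copies 0 upG + PGame.star) j ?_ ?_
    · exact fun j => isEmptyElim (α := ((0 : PGame.{u}).RightMoves)) j
    · intro j
      rw [add_moveRight_inr, upG_moveRight]
  | succ m ih =>
    intro j
    refine rightMoves_add_cases
      (P := fun j => (copies (m+1) upG.{u} + upG).moveRight j ≈ copies (m+1) upG + PGame.star)
      j ?_ ?_
    · intro j
      rw [add_moveRight_inl]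
      show (copies m upG + upG).moveRight j + upG ≈ copies (m+1) upG + PGame.star
      refine PGame.Equiv.trans (add_congr_left (ih j)) ?_
      rw [equiv_iff_game_eq, copies_succ]
      simp only [quot_add]
      abel
    · intro j
      rw [add_moveRight_inr, upG_moveRight]

lemma keyA (a b : ℕ) (hb : b ≤ a + 1) :
    ¬ (copies a upG.{u} + PGame.star ≤ copies b upG) := by
  intro h
  rw [le_iff_game_le] at h
  simp only [quot_add, quot_copies] at h
  rcases Nat.lt_or_ge b (a + 1) with hlt | hge
  · obtain ⟨k, rfl⟩ : ∃ k, a = b + k := ⟨a - b, by omega⟩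
    rw [add_nsmul] at h
    have h' : (k : ℕ) • (⟦upG.{u}⟧ : Game) + ⟦PGame.star.{u}⟧ ≤ 0 := by
      calc (k : ℕ) • (⟦upG.{u}⟧ : Game) + ⟦PGame.star.{u}⟧
          = -(b • (⟦upG.{u}⟧:Game)) + (b • ⟦upG⟧ + k • ⟦upG⟧ + ⟦PGame.star⟧) := by abel
        _ ≤ -(b • (⟦upG.{u}⟧:Game)) + b • ⟦upG⟧ := add_le_add_right h _
        _ = 0 := by abel
    apply not_copies_add_star_le_zero k
    rw [le_iff_game_le]
    calc (⟦copies k upG.{u} + PGame.star⟧ : Game)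
        = k • (⟦upG.{u}⟧ : Game) + ⟦PGame.star⟧ := by rw [quot_add, quot_copies]
      _ ≤ 0 := h'
      _ = ⟦(0 : PGame.{u})⟧ := rfl
  · have hb1 : b = a + 1 := le_antisymm hb hge
    subst hb1
    rw [succ_nsmul] at h
    have h' : (⟦PGame.star.{u}⟧ : Game) ≤ ⟦upG⟧ := by
      have := add_le_add_left h (-(a • (⟦upG.{u}⟧ : Game)))
      calc (⟦PGame.star.{u}⟧ : Game)
          = -(a • (⟦upG.{u}⟧ : Game)) + (a • ⟦upG⟧ + ⟦PGame.star⟧) := by abel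
        _ ≤ -(a • (⟦upG.{u}⟧ : Game)) + (a • ⟦upG⟧ + ⟦upG⟧) := add_le_add_right h _
        _ = ⟦upG⟧ := by abel
    exact not_star_le_upG (le_iff_game_le.mpr h')

lemma keyB (a b : ℕ) (hb : b + 1 ≤ a) :
    ¬ (copies a upG.{u} + PGame.star ≤ copies b upG + PGame.star) := by
  intro h
  rw [le_iff_game_le] at h
  simp only [quot_add, quot_copies] at h
  have h1 : (a : ℕ) • (⟦upG.{u}⟧ : Game) ≤ b • ⟦upG⟧ := le_of_add_le_add_right h
  obtain ⟨k, rfl⟩ : ∃ k, a = b + (k + 1) := ⟨a - b - 1, by omega⟩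
  rw [add_nsmul] at h1
  have h2 : ((k+1) : ℕ) • (⟦upG.{u}⟧ : Game) ≤ 0 := by
    calc ((k+1) : ℕ) • (⟦upG.{u}⟧ : Game)
        = -(b • (⟦upG.{u}⟧:Game)) + (b • ⟦upG⟧ + (k+1) • ⟦upG⟧) := by abel
      _ ≤ -(b • (⟦upG.{u}⟧:Game)) + b • ⟦upG⟧ := add_le_add_right h1 _
      _ = 0 := by abel
  apply not_copies_succ_le_zero k
  rw [le_iff_game_le]
  calc (⟦copies (k+1) upG.{u}⟧ : Game)
      = (k+1) • (⟦upG.{u}⟧ : Game) := quot_copies _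
    _ ≤ 0 := h2
    _ = ⟦(0 : PGame.{u})⟧ := rfl

/-- The main simultaneous induction. -/
lemma main (n : ℕ) : ∀ m : ℕ,
    (m ≤ n → copies m upG.{u} ⧏ H (copies n upG.{u})) ∧
    (m ≤ n + 1 → copies m upG.{u} ≤ H (copies n upG.{u})) ∧
    (m + 1 ≤ n → copies m upG.{u} + PGame.star.{u} ≤ H (copies n upG.{u})) := by
  intro m
  induction m using Nat.strong_induction_on with
  | _ m ih =>
  have hC : m ≤ n → copies m upG.{u} ⧏ H (copies n upG) := by
    intro hm
    rcases Nat.eq_zero_or_pos m with rfl | hpos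
    · apply lf_of_le_moveLeft (i := hL (copies n upG))
      rw [H_moveLeft, copies_zero]
    · obtain ⟨k, rfl⟩ : ∃ k, m = k + 1 := ⟨m - 1, by omega⟩
      have hB : copies k upG.{u} + PGame.star ≤ H (copies n upG) :=
        (ih k (Nat.lt_succ_self k)).2.2 (by omega)
      rw [copies_succ]
      apply lf_of_moveRight_le (j := toRightMovesAdd (Sum.inr uR))
      exact (le_congr_left (copies_moveRight k _)).mpr hB
  refine ⟨hC, ?_, ?_⟩
  · -- part A
    intro hm
    rw [le_iff_forall_lf]
    constructor
    · intro i
      rcases Nat.eq_zero_or_pos m with rfl | hpos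
      · exact isEmptyElim (α := ((0 : PGame.{u}).LeftMoves)) i
      · obtain ⟨k, rfl⟩ : ∃ k, m = k + 1 := ⟨m - 1, by omega⟩
        show (copies k upG + upG).moveLeft i ⧏ H (copies n upG)
        rw [lf_congr_left (copies_moveLeft k i)]
        -- goal : copies k upG ⧏ H (copies n upG)
        rcases Nat.eq_zero_or_pos k with rfl | hk
        · apply lf_of_le_moveLeft (i := hL (copies n upG))
          rw [H_moveLeft, copies_zero]
        · obtain ⟨k', rfl⟩ : ∃ k', k = k' + 1 := ⟨k - 1, by omega⟩
          have hB : copies k' upG.{u} + PGame.star ≤ H (copies n upG) :=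
            (ih k' (by omega)).2.2 (by omega)
          rw [copies_succ]
          apply lf_of_moveRight_le (j := toRightMovesAdd (Sum.inr uR))
          exact (le_congr_left (copies_moveRight k' _)).mpr hB
    · intro j
      rw [H_moveRight]
      exact PGame.not_le.mp (keyA n m hm)
  · -- part B
    intro hm
    rw [le_iff_forall_lf]
    constructor
    · intro i
      refine leftMoves_add_cases
        (P := fun i => (copies m upG.{u} + PGame.star).moveLeft i ⧏ H (copies n upG)) i ?_ ?_
      · intro i
        rcases Nat.eq_zero_or_pos m with rfl | hpos
        · exact isEmptyElim (α := ((0 : PGame.{u}).LeftMoves)) i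
        · obtain ⟨k, rfl⟩ : ∃ k, m = k + 1 := ⟨m - 1, by omega⟩
          rw [add_moveLeft_inl]
          show (copies k upG + upG).moveLeft i + PGame.star ⧏ H (copies n upG)
          rw [lf_congr_left (add_congr_left (copies_moveLeft k i))]
          -- goal : copies k upG + star ⧏ H (copies n upG)
          have hA : copies k upG.{u} ≤ H (copies n upG) := (ih k (by omega)).2.1 (by omega)
          apply lf_of_moveRight_le
            (j := toRightMovesAdd (Sum.inr (default : PGame.star.RightMoves)))
          rw [add_moveRight_inr, star_moveRight]
          exact (le_congr_left (add_zero_equiv _)).mpr hA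
      · intro i
        rw [add_moveLeft_inr, star_moveLeft]
        rw [lf_congr_left (add_zero_equiv _)]
        exact hC (by omega)
    · intro j
      rw [H_moveRight]
      exact PGame.not_le.mp (keyB n m hm)

end UpAux

theorem stmt2 : ∀ n : ℕ, 0 < n →
    copies n upG ≈ ofLists [0] [copies (n - 1) upG + star] := by
  intro n hn
  obtain ⟨N, rfl⟩ : ∃ N, n = N + 1 := ⟨n - 1, by omega⟩
  simp only [Nat.add_sub_cancel]
  constructor
  · exact (UpAux.main N (N + 1)).2.1 (le_refl _)
  · rw [le_iff_forall_lf]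
    constructor
    · intro i
      rw [UpAux.H_moveLeft (copies N upG) i]
      rw [UpAux.copies_succ]
      apply lf_of_le_moveLeft (i := toLeftMovesAdd (Sum.inr UpAux.uL))
      rw [add_moveLeft_inr, UpAux.upG_moveLeft]
      exact (le_congr_right (add_zero_equiv _)).mpr (UpAux.zero_le_copies N)
    · intro j
      show UpAux.H (copies N upG) ⧏ (copies N upG + upG).moveRight j
      rw [lf_congr_right (UpAux.copies_moveRight N j)]
      apply lf_of_moveRight_le (j := UpAux.hR (copies N upG))
      rw [UpAux.H_moveRight]
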